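/- MFC adversarial bound: in a finite-horizon MFG with L_P > 0, under Lipschitz and boundedness assumptions on r, πᴱ a Nash equilibrium, and ‖μₙ^{(πᴬ)πᴬ} − μₙ^{(πᴱ)πᴱ}‖₁ ≤ ε for all n, the exploitability satisfies 𝓔(πᴬ) ≤ ((2L_r + r_max)H + 3 L_P r_max H²)·ε, a bound quadratic (not exponential) in the horizon H. -/

import Mathlib

open Finset

/-- Population flow of policy `pol` in a mean-field game: the dynamics at time
`n` is driven by the population distribution itself. -/
noncomputable def popFlow {S A : Type*} [Fintype S] [Fintype A]
    (P : S → A → (S → ℝ) → S → ℝ) (pol : ℕ → S → A → ℝ) (ρ0 : S → ℝ) : ℕ → S → ℝ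
  | 0 => ρ0
  | n + 1 => fun s' => ∑ s : S, ∑ a : A,
      popFlow P pol ρ0 n s * pol n s a * P s a (popFlow P pol ρ0 n) s'

/-- Flow of a single agent using policy `pol` while the dynamics is driven by a
given population distribution sequence `ρpop`. -/
noncomputable def agentFlow {S A : Type*} [Fintype S] [Fintype A]
    (P : S → A → (S → ℝ) → S → ℝ) (ρpop : ℕ → S → ℝ)
    (pol : ℕ → S → A → ℝ) (ρ0 : S → ℝ) : ℕ → S → ℝ
  | 0 => ρ0
  | n + 1 => fun s' => ∑ s : S, ∑ a : A,
      agentFlow P ρpop pol ρ0 n s * pol n s a * P s a (ρpop n) s'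

/-- Value of an agent using `pol` against the population sequence `ρpop`. -/
noncomputable def val {S A : Type*} [Fintype S] [Fintype A]
    (P : S → A → (S → ℝ) → S → ℝ) (r : S → A → (S → ℝ) → ℝ) (ρ0 : S → ℝ) (H : ℕ)
    (pol : ℕ → S → A → ℝ) (ρpop : ℕ → S → ℝ) : ℝ :=
  ∑ n ∈ range H, ∑ s, ∑ a, agentFlow P ρpop pol ρ0 n s * pol n s a * r s a (ρpop n)

section Aux
variable {S A : Type*} [Fintype S] [Fintype A]

lemma agentFlow_prob (P : S → A → (S → ℝ) → S → ℝ)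
    (hP : ∀ s a (ρ : S → ℝ), (∀ s', 0 ≤ P s a ρ s') ∧ ∑ s', P s a ρ s' = 1)
    (ρpop : ℕ → S → ℝ) (pol : ℕ → S → A → ℝ)
    (hpol : ∀ n s, (∀ a, 0 ≤ pol n s a) ∧ ∑ a, pol n s a = 1)
    (ρ0 : S → ℝ) (hρ0 : (∀ s, 0 ≤ ρ0 s) ∧ ∑ s, ρ0 s = 1) :
    ∀ n, (∀ s, 0 ≤ agentFlow P ρpop pol ρ0 n s) ∧
      ∑ s, agentFlow P ρpop pol ρ0 n s = 1 := by
  intro n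
  induction n with
  | zero => exact hρ0
  | succ n ih =>
    constructor
    · intro s'
      apply Finset.sum_nonneg; intro s _
      apply Finset.sum_nonneg; intro a _
      exact mul_nonneg (mul_nonneg (ih.1 s) ((hpol n s).1 a)) ((hP s a (ρpop n)).1 s')
    · show ∑ s' : S, ∑ s : S, ∑ a : A,
        agentFlow P ρpop pol ρ0 n s * pol n s a * P s a (ρpop n) s' = 1
      rw [Finset.sum_comm]
      have h1 : ∀ s : S, ∑ s' : S, ∑ a : A,
          agentFlow P ρpop pol ρ0 n s * pol n s a * P s a (ρpop n) s'
          = agentFlow P ρpop pol ρ0 n s := by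
        intro s
        rw [Finset.sum_comm]
        have h2 : ∀ a : A, ∑ s' : S,
            agentFlow P ρpop pol ρ0 n s * pol n s a * P s a (ρpop n) s'
            = agentFlow P ρpop pol ρ0 n s * pol n s a := by
          intro a
          rw [← Finset.mul_sum, (hP s a (ρpop n)).2, mul_one]
        simp_rw [h2, ← Finset.mul_sum, (hpol n s).2, mul_one]
      simp_rw [h1]
      exact ih.2

lemma popFlow_eq_agentFlow (P : S → A → (S → ℝ) → S → ℝ)
    (pol : ℕ → S → A → ℝ) (ρ0 : S → ℝ) :
    ∀ n, popFlow P pol ρ0 n = agentFlow P (popFlow P pol ρ0) pol ρ0 n := by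
  intro n
  induction n with
  | zero => rfl
  | succ n ih =>
    funext s'
    show (∑ s : S, ∑ a : A, popFlow P pol ρ0 n s * pol n s a * P s a (popFlow P pol ρ0 n) s')
      = ∑ s : S, ∑ a : A, agentFlow P (popFlow P pol ρ0) pol ρ0 n s * pol n s a
          * P s a (popFlow P pol ρ0 n) s'
    rw [← ih]

lemma step_bound (P : S → A → (S → ℝ) → S → ℝ) (LP : ℝ)
    (hP : ∀ s a (ρ : S → ℝ), (∀ s', 0 ≤ P s a ρ s') ∧ ∑ s', P s a ρ s' = 1)
    (hPLip : ∀ s a (ρ ρ' : S → ℝ),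
      ∑ s', |P s a ρ s' - P s a ρ' s'| ≤ LP * ∑ x, |ρ x - ρ' x|)
    (pol : S → A → ℝ) (hpol : ∀ s, (∀ a, 0 ≤ pol s a) ∧ ∑ a, pol s a = 1)
    (μ ν : S → ℝ) (hν : ∀ s, 0 ≤ ν s) (hνs : ∑ s, ν s = 1) (ρ ρ' : S → ℝ) :
    ∑ s', |(∑ s, ∑ a, μ s * pol s a * P s a ρ s') - ∑ s, ∑ a, ν s * pol s a * P s a ρ' s'|
      ≤ (∑ s, |μ s - ν s|) + LP * ∑ x, |ρ x - ρ' x| := by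
  have h1 : ∀ s' : S, |(∑ s, ∑ a, μ s * pol s a * P s a ρ s')
        - ∑ s, ∑ a, ν s * pol s a * P s a ρ' s'|
      ≤ ∑ s, ∑ a, |μ s * pol s a * P s a ρ s' - ν s * pol s a * P s a ρ' s'| := by
    intro s'
    rw [← Finset.sum_sub_distrib]
    refine le_trans (Finset.abs_sum_le_sum_abs _ _) (Finset.sum_le_sum fun s _ => ?_)
    rw [← Finset.sum_sub_distrib]
    exact Finset.abs_sum_le_sum_abs _ _
  have h2 : ∀ s a, ∑ s', |μ s * pol s a * P s a ρ s' - ν s * pol s a * P s a ρ' s'|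
      ≤ pol s a * (|μ s - ν s| + ν s * (LP * ∑ x, |ρ x - ρ' x|)) := by
    intro s a
    have key : ∀ s', |μ s * pol s a * P s a ρ s' - ν s * pol s a * P s a ρ' s'|
        ≤ pol s a * (|μ s - ν s| * P s a ρ s' + ν s * |P s a ρ s' - P s a ρ' s'|) := by
      intro s'
      have e : μ s * pol s a * P s a ρ s' - ν s * pol s a * P s a ρ' s'
          = pol s a * ((μ s - ν s) * P s a ρ s' + ν s * (P s a ρ s' - P s a ρ' s')) := by
        ring
      rw [e, abs_mul, abs_of_nonneg ((hpol s).1 a)]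
      refine mul_le_mul_of_nonneg_left ?_ ((hpol s).1 a)
      refine le_trans (abs_add_le _ _) ?_
      rw [abs_mul, abs_mul, abs_of_nonneg ((hP s a ρ).1 s'), abs_of_nonneg (hν s)]
    refine le_trans (Finset.sum_le_sum fun s' _ => key s') ?_
    rw [← Finset.mul_sum]
    refine mul_le_mul_of_nonneg_left ?_ ((hpol s).1 a)
    rw [Finset.sum_add_distrib, ← Finset.mul_sum, ← Finset.mul_sum, (hP s a ρ).2, mul_one]
    exact add_le_add_right (mul_le_mul_of_nonneg_left (hPLip s a ρ ρ') (hν s)) _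
  calc ∑ s', |(∑ s, ∑ a, μ s * pol s a * P s a ρ s')
        - ∑ s, ∑ a, ν s * pol s a * P s a ρ' s'|
      ≤ ∑ s', ∑ s, ∑ a, |μ s * pol s a * P s a ρ s' - ν s * pol s a * P s a ρ' s'| :=
        Finset.sum_le_sum fun s' _ => h1 s'
    _ = ∑ s, ∑ a, ∑ s', |μ s * pol s a * P s a ρ s' - ν s * pol s a * P s a ρ' s'| := by
        rw [Finset.sum_comm]
        exact Finset.sum_congr rfl fun s _ => Finset.sum_comm
    _ ≤ ∑ s, ∑ a, pol s a * (|μ s - ν s| + ν s * (LP * ∑ x, |ρ x - ρ' x|)) :=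
        Finset.sum_le_sum fun s _ => Finset.sum_le_sum fun a _ => h2 s a
    _ = ∑ s, (|μ s - ν s| + ν s * (LP * ∑ x, |ρ x - ρ' x|)) := by
        refine Finset.sum_congr rfl fun s _ => ?_
        rw [← Finset.sum_mul, (hpol s).2, one_mul]
    _ = (∑ s, |μ s - ν s|) + (∑ s, ν s) * (LP * ∑ x, |ρ x - ρ' x|) := by
        rw [Finset.sum_add_distrib, ← Finset.sum_mul]
    _ = (∑ s, |μ s - ν s|) + LP * ∑ x, |ρ x - ρ' x| := by rw [hνs, one_mul]

lemma reward_step1 (u v f g : S → A → ℝ) (rmax c δ : ℝ) (hr : 0 ≤ rmax)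
    (hu : ∀ s a, 0 ≤ u s a) (hus : ∑ s, ∑ a, u s a = 1)
    (hf : ∀ s a, |f s a| ≤ rmax) (hc : ∀ s a, g s a - f s a ≤ c)
    (hδ : ∑ s, ∑ a, |u s a - v s a| ≤ δ) :
    (∑ s, ∑ a, u s a * g s a) - ∑ s, ∑ a, v s a * f s a ≤ rmax * δ + c := by
  have key : ∀ s a, u s a * g s a - v s a * f s a
      ≤ |u s a - v s a| * rmax + u s a * c := by
    intro s a
    have h1 : u s a * g s a - v s a * f s a
        = (u s a - v s a) * f s a + u s a * (g s a - f s a) := by ring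
    have h2 : (u s a - v s a) * f s a ≤ |u s a - v s a| * rmax := by
      refine le_trans (le_abs_self _) ?_
      rw [abs_mul]
      exact mul_le_mul_of_nonneg_left (hf s a) (abs_nonneg _)
    have h3 : u s a * (g s a - f s a) ≤ u s a * c :=
      mul_le_mul_of_nonneg_left (hc s a) (hu s a)
    linarith
  calc (∑ s, ∑ a, u s a * g s a) - ∑ s, ∑ a, v s a * f s a
      = ∑ s, ∑ a, (u s a * g s a - v s a * f s a) := by
        rw [← Finset.sum_sub_distrib]
        exact Finset.sum_congr rfl fun s _ => (Finset.sum_sub_distrib _ _).symm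
    _ ≤ ∑ s, ∑ a, (|u s a - v s a| * rmax + u s a * c) :=
        Finset.sum_le_sum fun s _ => Finset.sum_le_sum fun a _ => key s a
    _ = (∑ s, ∑ a, |u s a - v s a|) * rmax + (∑ s, ∑ a, u s a) * c := by
        simp [Finset.sum_add_distrib, Finset.sum_mul]
    _ ≤ δ * rmax + 1 * c := by
        rw [hus]
        exact add_le_add_left (mul_le_mul_of_nonneg_right hδ hr) _
    _ = rmax * δ + c := by ring

lemma reward_step2 (u v f g : S → A → ℝ) (rmax c δ : ℝ) (hr : 0 ≤ rmax)
    (hv : ∀ s a, 0 ≤ v s a) (hvs : ∑ s, ∑ a, v s a = 1)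
    (hg : ∀ s a, |g s a| ≤ rmax) (hc : ∀ s a, g s a - f s a ≤ c)
    (hδ : ∑ s, ∑ a, |u s a - v s a| ≤ δ) :
    (∑ s, ∑ a, u s a * g s a) - ∑ s, ∑ a, v s a * f s a ≤ rmax * δ + c := by
  have key : ∀ s a, u s a * g s a - v s a * f s a
      ≤ |u s a - v s a| * rmax + v s a * c := by
    intro s a
    have h1 : u s a * g s a - v s a * f s a
        = (u s a - v s a) * g s a + v s a * (g s a - f s a) := by ring
    have h2 : (u s a - v s a) * g s a ≤ |u s a - v s a| * rmax := by
      refine le_trans (le_abs_self _) ?_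
      rw [abs_mul]
      exact mul_le_mul_of_nonneg_left (hg s a) (abs_nonneg _)
    have h3 : v s a * (g s a - f s a) ≤ v s a * c :=
      mul_le_mul_of_nonneg_left (hc s a) (hv s a)
    linarith
  calc (∑ s, ∑ a, u s a * g s a) - ∑ s, ∑ a, v s a * f s a
      = ∑ s, ∑ a, (u s a * g s a - v s a * f s a) := by
        rw [← Finset.sum_sub_distrib]
        exact Finset.sum_congr rfl fun s _ => (Finset.sum_sub_distrib _ _).symm
    _ ≤ ∑ s, ∑ a, (|u s a - v s a| * rmax + v s a * c) :=
        Finset.sum_le_sum fun s _ => Finset.sum_le_sum fun a _ => key s a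
    _ = (∑ s, ∑ a, |u s a - v s a|) * rmax + (∑ s, ∑ a, v s a) * c := by
        simp [Finset.sum_add_distrib, Finset.sum_mul]
    _ ≤ δ * rmax + 1 * c := by
        rw [hvs]
        exact add_le_add_left (mul_le_mul_of_nonneg_right hδ hr) _
    _ = rmax * δ + c := by ring

end Aux

/-- MFC adversarial bound: if `‖μₙ^{(πᴬ)πᴬ} − μₙ^{(πᴱ)πᴱ}‖₁ ≤ ε` for all `n`, then `𝓔(πᴬ) ≤ ((2L_r + r_max)H + 3 L_P r_max H²) ε`, quadratic in the horizon. -/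
theorem mfc_adv_nash_imitation_gap {S A : Type*} [Fintype S] [Fintype A]
    (P : S → A → (S → ℝ) → S → ℝ) (r : S → A → (S → ℝ) → ℝ) (ρ0 : S → ℝ)
    (H : ℕ) (πE πA : ℕ → S → A → ℝ) (LP Lr rmax ε : ℝ) (hLP : 0 < LP)
    (hP : ∀ s a (ρ : S → ℝ), (∀ s', 0 ≤ P s a ρ s') ∧ ∑ s', P s a ρ s' = 1)
    (hPLip : ∀ s a (ρ ρ' : S → ℝ),
      ∑ s', |P s a ρ s' - P s a ρ' s'| ≤ LP * ∑ x, |ρ x - ρ' x|)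
    (hrLip : ∀ s a (ρ ρ' : S → ℝ), |r s a ρ - r s a ρ'| ≤ Lr * ∑ x, |ρ x - ρ' x|)
    (hrmax : ∀ n < H, ∀ s a, |r s a (popFlow P πE ρ0 n)| ≤ rmax)
    (hπE : ∀ n s, (∀ a, 0 ≤ πE n s a) ∧ ∑ a, πE n s a = 1)
    (hπA : ∀ n s, (∀ a, 0 ≤ πA n s a) ∧ ∑ a, πA n s a = 1)
    (hρ0 : (∀ s, 0 ≤ ρ0 s) ∧ ∑ s, ρ0 s = 1)
    (hNash : ∀ π' : ℕ → S → A → ℝ, (∀ n s, (∀ a, 0 ≤ π' n s a) ∧ ∑ a, π' n s a = 1) →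
      val P r ρ0 H π' (popFlow P πE ρ0) ≤ val P r ρ0 H πE (popFlow P πE ρ0))
    (hErr : ∀ n, ∑ s, ∑ a, |πA n s a * popFlow P πA ρ0 n s - πE n s a * popFlow P πE ρ0 n s| ≤ ε) :
    ∀ π' : ℕ → S → A → ℝ, (∀ n s, (∀ a, 0 ≤ π' n s a) ∧ ∑ a, π' n s a = 1) →
      val P r ρ0 H π' (popFlow P πA ρ0) - val P r ρ0 H πA (popFlow P πA ρ0) ≤
        ((2 * Lr + rmax) * H + 3 * LP * rmax * H ^ 2) * ε := by
  intro π' hπ'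
  classical
  rcases Nat.eq_zero_or_pos H with hH0 | hHpos
  · subst hH0; simp [_root_.val]
  have hε : 0 ≤ ε :=
    le_trans (Finset.sum_nonneg fun s _ => Finset.sum_nonneg fun a _ => abs_nonneg _) (hErr 0)
  have hS : Nonempty S := by
    by_contra h
    rw [not_nonempty_iff] at h
    have h2 := hρ0.2
    rw [Finset.univ_eq_empty, Finset.sum_empty] at h2
    norm_num at h2
  obtain ⟨s0⟩ := hS
  have hAne : Nonempty A := by
    by_contra h
    rw [not_nonempty_iff] at h
    have h2 := (hπE 0 s0).2
    rw [Finset.univ_eq_empty, Finset.sum_empty] at h2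
    norm_num at h2
  obtain ⟨a0⟩ := hAne
  have hrmax0 : 0 ≤ rmax := le_trans (abs_nonneg _) (hrmax 0 hHpos s0 a0)
  have hLr : 0 ≤ Lr := by
    have h1 := hrLip s0 a0 (fun x => if x = s0 then 1 else 0) (fun _ => 0)
    have h2 : ∑ x : S, |(if x = s0 then (1:ℝ) else 0) - (0:ℝ)| = 1 := by
      simp [sub_zero, apply_ite abs, abs_one, abs_zero, Finset.sum_ite_eq']
    rw [h2, mul_one] at h1
    exact le_trans (abs_nonneg _) h1
  have hρAprob : ∀ n, (∀ s, 0 ≤ popFlow P πA ρ0 n s) ∧ ∑ s, popFlow P πA ρ0 n s = 1 := by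
    intro n
    rw [popFlow_eq_agentFlow]
    exact agentFlow_prob P hP _ πA hπA ρ0 hρ0 n
  have hρdiff : ∀ n, ∑ s, |popFlow P πA ρ0 n s - popFlow P πE ρ0 n s| ≤ ε := by
    intro n
    refine le_trans (Finset.sum_le_sum fun s _ => ?_) (hErr n)
    have hA1 : popFlow P πA ρ0 n s = ∑ a, πA n s a * popFlow P πA ρ0 n s := by
      rw [← Finset.sum_mul, (hπA n s).2, one_mul]
    have hE1 : popFlow P πE ρ0 n s = ∑ a, πE n s a * popFlow P πE ρ0 n s := by
      rw [← Finset.sum_mul, (hπE n s).2, one_mul]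
    calc |popFlow P πA ρ0 n s - popFlow P πE ρ0 n s|
        = |∑ a, (πA n s a * popFlow P πA ρ0 n s - πE n s a * popFlow P πE ρ0 n s)| := by
          rw [Finset.sum_sub_distrib, ← hA1, ← hE1]
      _ ≤ ∑ a, |πA n s a * popFlow P πA ρ0 n s - πE n s a * popFlow P πE ρ0 n s| :=
          Finset.abs_sum_le_sum_abs _ _
  have hμA := agentFlow_prob P hP (popFlow P πA ρ0) π' hπ' ρ0 hρ0
  have hμE := agentFlow_prob P hP (popFlow P πE ρ0) π' hπ' ρ0 hρ0
  have hd : ∀ n, (∑ s, |agentFlow P (popFlow P πA ρ0) π' ρ0 n s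
      - agentFlow P (popFlow P πE ρ0) π' ρ0 n s|) ≤ n * (LP * ε) := by
    intro n
    induction n with
    | zero => simp [agentFlow]
    | succ n ih =>
      have step := step_bound P LP hP hPLip (π' n) (hπ' n)
        (agentFlow P (popFlow P πA ρ0) π' ρ0 n) (agentFlow P (popFlow P πE ρ0) π' ρ0 n)
        (hμE n).1 (hμE n).2 (popFlow P πA ρ0 n) (popFlow P πE ρ0 n)
      calc ∑ s', |agentFlow P (popFlow P πA ρ0) π' ρ0 (n+1) s'
            - agentFlow P (popFlow P πE ρ0) π' ρ0 (n+1) s'|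
          = ∑ s', |(∑ s, ∑ a, agentFlow P (popFlow P πA ρ0) π' ρ0 n s * π' n s a
                * P s a (popFlow P πA ρ0 n) s')
              - ∑ s, ∑ a, agentFlow P (popFlow P πE ρ0) π' ρ0 n s * π' n s a
                * P s a (popFlow P πE ρ0 n) s'| := rfl
        _ ≤ (∑ s, |agentFlow P (popFlow P πA ρ0) π' ρ0 n s
              - agentFlow P (popFlow P πE ρ0) π' ρ0 n s|)
            + LP * ∑ x, |popFlow P πA ρ0 n x - popFlow P πE ρ0 n x| := step
        _ ≤ ↑n * (LP * ε) + LP * ε :=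
            add_le_add ih (mul_le_mul_of_nonneg_left (hρdiff n) hLP.le)
        _ = (↑(n+1) : ℝ) * (LP * ε) := by push_cast; ring
  have htermA : val P r ρ0 H π' (popFlow P πA ρ0) - val P r ρ0 H π' (popFlow P πE ρ0)
      ≤ ↑H * (rmax * (↑H * (LP * ε)) + Lr * ε) := by
    simp only [_root_.val]
    rw [← Finset.sum_sub_distrib]
    have hstep : ∀ n ∈ range H,
        (∑ s, ∑ a, agentFlow P (popFlow P πA ρ0) π' ρ0 n s * π' n s a
            * r s a (popFlow P πA ρ0 n))
          - (∑ s, ∑ a, agentFlow P (popFlow P πE ρ0) π' ρ0 n s * π' n s a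
            * r s a (popFlow P πE ρ0 n))
        ≤ rmax * (↑H * (LP * ε)) + Lr * ε := by
      intro n hn
      refine reward_step1
        (fun s a => agentFlow P (popFlow P πA ρ0) π' ρ0 n s * π' n s a)
        (fun s a => agentFlow P (popFlow P πE ρ0) π' ρ0 n s * π' n s a)
        (fun s a => r s a (popFlow P πE ρ0 n))
        (fun s a => r s a (popFlow P πA ρ0 n))
        rmax (Lr * ε) (↑H * (LP * ε)) hrmax0 ?_ ?_ ?_ ?_ ?_
      · exact fun s a => mul_nonneg ((hμA n).1 s) ((hπ' n s).1 a)
      · have e : ∀ s, ∑ a, agentFlow P (popFlow P πA ρ0) π' ρ0 n s * π' n s a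
            = agentFlow P (popFlow P πA ρ0) π' ρ0 n s := fun s => by
          rw [← Finset.mul_sum, (hπ' n s).2, mul_one]
        simp_rw [e]
        exact (hμA n).2
      · exact fun s a => hrmax n (Finset.mem_range.mp hn) s a
      · intro s a
        refine le_trans (le_trans (le_abs_self _)
          (hrLip s a (popFlow P πA ρ0 n) (popFlow P πE ρ0 n))) ?_
        exact mul_le_mul_of_nonneg_left (hρdiff n) hLr
      · have e : ∀ s, ∑ a, |agentFlow P (popFlow P πA ρ0) π' ρ0 n s * π' n s a
              - agentFlow P (popFlow P πE ρ0) π' ρ0 n s * π' n s a|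
            = |agentFlow P (popFlow P πA ρ0) π' ρ0 n s
              - agentFlow P (popFlow P πE ρ0) π' ρ0 n s| := by
          intro s
          have e2 : ∀ a, |agentFlow P (popFlow P πA ρ0) π' ρ0 n s * π' n s a
                - agentFlow P (popFlow P πE ρ0) π' ρ0 n s * π' n s a|
              = |agentFlow P (popFlow P πA ρ0) π' ρ0 n s
                - agentFlow P (popFlow P πE ρ0) π' ρ0 n s| * π' n s a := fun a => by
            rw [← sub_mul, abs_mul, abs_of_nonneg ((hπ' n s).1 a)]
          simp_rw [e2, ← Finset.mul_sum, (hπ' n s).2, mul_one]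
        calc ∑ s, ∑ a, |agentFlow P (popFlow P πA ρ0) π' ρ0 n s * π' n s a
              - agentFlow P (popFlow P πE ρ0) π' ρ0 n s * π' n s a|
            = ∑ s, |agentFlow P (popFlow P πA ρ0) π' ρ0 n s
              - agentFlow P (popFlow P πE ρ0) π' ρ0 n s| := Finset.sum_congr rfl fun s _ => e s
          _ ≤ ↑n * (LP * ε) := hd n
          _ ≤ ↑H * (LP * ε) := by
              refine mul_le_mul_of_nonneg_right ?_ (mul_nonneg hLP.le hε)
              exact_mod_cast (Finset.mem_range.mp hn).le
    calc ∑ n ∈ range H, ((∑ s, ∑ a, agentFlow P (popFlow P πA ρ0) π' ρ0 n s * π' n s a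
            * r s a (popFlow P πA ρ0 n))
          - ∑ s, ∑ a, agentFlow P (popFlow P πE ρ0) π' ρ0 n s * π' n s a
            * r s a (popFlow P πE ρ0 n))
        ≤ ∑ _n ∈ range H, (rmax * (↑H * (LP * ε)) + Lr * ε) := Finset.sum_le_sum hstep
      _ = ↑H * (rmax * (↑H * (LP * ε)) + Lr * ε) := by
          simp [Finset.sum_const, Finset.card_range, nsmul_eq_mul]
          ring
  have htermC : val P r ρ0 H πE (popFlow P πE ρ0) - val P r ρ0 H πA (popFlow P πA ρ0)
      ≤ ↑H * (rmax * ε + Lr * ε) := by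
    simp only [_root_.val]
    rw [← Finset.sum_sub_distrib]
    simp only [← popFlow_eq_agentFlow]
    have hstep : ∀ n ∈ range H,
        (∑ s, ∑ a, popFlow P πE ρ0 n s * πE n s a * r s a (popFlow P πE ρ0 n))
          - (∑ s, ∑ a, popFlow P πA ρ0 n s * πA n s a * r s a (popFlow P πA ρ0 n))
        ≤ rmax * ε + Lr * ε := by
      intro n hn
      refine reward_step2
        (fun s a => popFlow P πE ρ0 n s * πE n s a)
        (fun s a => popFlow P πA ρ0 n s * πA n s a)
        (fun s a => r s a (popFlow P πA ρ0 n))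
        (fun s a => r s a (popFlow P πE ρ0 n))
        rmax (Lr * ε) ε hrmax0 ?_ ?_ ?_ ?_ ?_
      · exact fun s a => mul_nonneg ((hρAprob n).1 s) ((hπA n s).1 a)
      · have e : ∀ s, ∑ a, popFlow P πA ρ0 n s * πA n s a = popFlow P πA ρ0 n s := fun s => by
          rw [← Finset.mul_sum, (hπA n s).2, mul_one]
        simp_rw [e]
        exact (hρAprob n).2
      · exact fun s a => hrmax n (Finset.mem_range.mp hn) s a
      · intro s a
        refine le_trans (le_trans (le_abs_self _)
          (hrLip s a (popFlow P πE ρ0 n) (popFlow P πA ρ0 n))) ?_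
        have e : ∑ x, |popFlow P πE ρ0 n x - popFlow P πA ρ0 n x|
            = ∑ x, |popFlow P πA ρ0 n x - popFlow P πE ρ0 n x| :=
          Finset.sum_congr rfl fun x _ => abs_sub_comm _ _
        rw [e]
        exact mul_le_mul_of_nonneg_left (hρdiff n) hLr
      · have e : ∀ s a, |popFlow P πE ρ0 n s * πE n s a - popFlow P πA ρ0 n s * πA n s a|
            = |πA n s a * popFlow P πA ρ0 n s - πE n s a * popFlow P πE ρ0 n s| := by
          intro s a
          rw [abs_sub_comm, mul_comm (popFlow P πA ρ0 n s), mul_comm (popFlow P πE ρ0 n s)]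
        calc ∑ s, ∑ a, |popFlow P πE ρ0 n s * πE n s a - popFlow P πA ρ0 n s * πA n s a|
            = ∑ s, ∑ a, |πA n s a * popFlow P πA ρ0 n s - πE n s a * popFlow P πE ρ0 n s| :=
              Finset.sum_congr rfl fun s _ => Finset.sum_congr rfl fun a _ => e s a
          _ ≤ ε := hErr n
    calc ∑ n ∈ range H, ((∑ s, ∑ a, popFlow P πE ρ0 n s * πE n s a * r s a (popFlow P πE ρ0 n))
          - ∑ s, ∑ a, popFlow P πA ρ0 n s * πA n s a * r s a (popFlow P πA ρ0 n))
        ≤ ∑ _n ∈ range H, (rmax * ε + Lr * ε) := Finset.sum_le_sum hstep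
      _ = ↑H * (rmax * ε + Lr * ε) := by
          simp [Finset.sum_const, Finset.card_range, nsmul_eq_mul]
          ring
  have hB := hNash π' hπ'
  have key : val P r ρ0 H π' (popFlow P πA ρ0) - val P r ρ0 H πA (popFlow P πA ρ0)
      ≤ ↑H * (rmax * (↑H * (LP * ε)) + Lr * ε) + ↑H * (rmax * ε + Lr * ε) := by
    linarith
  refine le_trans key ?_
  nlinarith [mul_nonneg (mul_nonneg (mul_nonneg hLP.le hrmax0) (sq_nonneg (H:ℝ))) hε]
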